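/- Let n and k be natural numbers with k ≥ 1. For all a, b in F(n,k) one has the identity of real numbers ⟨s a, s b⟩ = ⟨s† a, s† b⟩ + ((n : ℝ) − 2·k)·⟨a, b⟩, where on the left s : F(n,k) → F(n,k+1) is the up operator, on the right s† : F(n,k) → F(n,k−1) is the down operator (defined by (s† a)(S) = Σ_{j ∉ S} a(S ∪ {j}) for (k−1)-element subsets S), and the coefficient n − 2k is taken in ℝ (it may be negative). -/
import Mathlib

/-- `FSub n k` is the real vector space of real-valued functions on the collection of
`k`-element subsets of `Fin n`. -/
abbrev FSub (n k : ℕ) : Type := {S : Finset (Fin n) // S.card = k} → ℝ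

/-- The up operator `s : F(n,k) → F(n,k+1)`, `(s a)(T) = Σ_{j ∈ T} a (T \ {j})`. -/
noncomputable def upOp (n k : ℕ) (a : FSub n k) : FSub n (k + 1) := fun T =>
  ∑ j ∈ T.1.attach, a ⟨T.1.erase j.1, by
    have h1 := Finset.card_erase_of_mem j.2
    have h2 := T.2
    omega⟩

/-- The down operator `s† : F(n,k) → F(n,k-1)`, `(s† a)(S) = Σ_{j ∉ S} a (S ∪ {j})`
(for `k ≥ 1`; the guard is provably satisfied in that case). -/
noncomputable def downOp (n k : ℕ) (a : FSub n k) : FSub n (k - 1) := fun S =>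
  ∑ j ∈ (S.1ᶜ).attach,
    if h : (insert j.1 S.1).card = k then a ⟨insert j.1 S.1, h⟩ else 0

/-- The standard inner product on `F(n,k)`: `⟨a,b⟩ = Σ_S a(S)·b(S)`. -/
noncomputable def ip (n k : ℕ) (a b : FSub n k) : ℝ :=
  ∑ S : {S : Finset (Fin n) // S.card = k}, a S * b S

/-- extension of a function on k-subsets to all finsets, zero elsewhere -/
noncomputable def extF (n k : ℕ) (a : FSub n k) : Finset (Fin n) → ℝ := fun S =>
  if h : S.card = k then a ⟨S, h⟩ else 0

noncomputable def Uop (n : ℕ) (f : Finset (Fin n) → ℝ) : Finset (Fin n) → ℝ :=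
  fun T => ∑ j ∈ T, f (T.erase j)

noncomputable def Dop (n : ℕ) (f : Finset (Fin n) → ℝ) : Finset (Fin n) → ℝ :=
  fun S => ∑ j ∈ Sᶜ, f (insert j S)

lemma ip_ext (n k : ℕ) (a b : FSub n k) :
    ip n k a b = ∑ S : Finset (Fin n), extF n k a S * extF n k b S := by
  rw [ip]
  rw [← Finset.sum_filter_add_sum_filter_not Finset.univ (fun S : Finset (Fin n) => S.card = k)]
  have h2 : ∑ S ∈ Finset.univ.filter (fun S : Finset (Fin n) => ¬ S.card = k),
      extF n k a S * extF n k b S = 0 := by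
    apply Finset.sum_eq_zero
    intro S hS
    simp only [Finset.mem_filter] at hS
    simp [extF, dif_neg hS.2]
  rw [h2, add_zero]
  rw [← Finset.sum_attach (Finset.univ.filter (fun S : Finset (Fin n) => S.card = k))
      (fun S => extF n k a S * extF n k b S)]
  apply Finset.sum_nbij' (fun S : {S : Finset (Fin n) // S.card = k} =>
      (⟨S.1, by simp [S.2]⟩ : {x // x ∈ Finset.univ.filter (fun S : Finset (Fin n) => S.card = k)}))
    (fun S => ⟨S.1, by have := S.2; simp at this; exact this⟩)
  · intro x _; exact Finset.mem_univ _
  · intro x _; exact Finset.mem_univ _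
  · intro x _; rfl
  · intro x _; rfl
  · intro x _
    have hx : (x.1 : Finset (Fin n)).card = k := x.2
    simp [extF, hx]

lemma ext_up (n k : ℕ) (a : FSub n k) (T : Finset (Fin n)) :
    extF n (k+1) (upOp n k a) T = Uop n (extF n k a) T := by
  by_cases h : T.card = k + 1
  · have hL : extF n (k+1) (upOp n k a) T = upOp n k a ⟨T, h⟩ := by
      simp [extF, h]
    rw [hL]
    unfold upOp Uop
    rw [← Finset.sum_attach T (fun j => extF n k a (T.erase j))]
    apply Finset.sum_congr rfl
    intro j _
    have hc : (T.erase j.1).card = k := by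
      have h1 : (T.erase j.1).card = T.card - 1 := Finset.card_erase_of_mem j.2
      omega
    simp [extF, hc]
  · have hL : extF n (k+1) (upOp n k a) T = 0 := by simp [extF, h]
    rw [hL]
    symm
    apply Finset.sum_eq_zero
    intro j hj
    have hc : (T.erase j).card ≠ k := by
      have h1 := Finset.card_erase_of_mem hj
      have h2 : 1 ≤ T.card := Finset.card_pos.2 ⟨j, hj⟩
      omega
    simp [extF, hc]

lemma ext_down (n k : ℕ) (hk : 1 ≤ k) (a : FSub n k) (S : Finset (Fin n)) :
    extF n (k-1) (downOp n k a) S = Dop n (extF n k a) S := by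
  by_cases h : S.card = k - 1
  · have hL : extF n (k-1) (downOp n k a) S = downOp n k a ⟨S, h⟩ := by
      simp [extF, h]
    rw [hL]
    unfold downOp Dop
    rw [← Finset.sum_attach Sᶜ (fun j => extF n k a (insert j S))]
    apply Finset.sum_congr rfl
    intro j _
    have hj : j.1 ∉ S := Finset.mem_compl.1 j.2
    have hc : (insert j.1 S).card = k := by
      rw [Finset.card_insert_of_notMem hj]; omega
    simp [extF, hc]
  · have hL : extF n (k-1) (downOp n k a) S = 0 := by simp [extF, h]
    rw [hL]
    symm
    apply Finset.sum_eq_zero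
    intro j hj
    have hj' : j ∉ S := by simpa using hj
    have hc : (insert j S).card ≠ k := by
      rw [Finset.card_insert_of_notMem hj']; omega
    simp [extF, hc]

lemma adjointUD (n : ℕ) (f g : Finset (Fin n) → ℝ) :
    ∑ T : Finset (Fin n), Uop n f T * g T = ∑ S : Finset (Fin n), f S * Dop n g S := by
  unfold Uop Dop
  simp_rw [Finset.sum_mul, Finset.mul_sum]
  rw [Finset.sum_sigma' Finset.univ (fun T : Finset (Fin n) => T)
      (fun T j => f (T.erase j) * g T),
    Finset.sum_sigma' Finset.univ (fun S : Finset (Fin n) => Sᶜ)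
      (fun S j => f S * g (insert j S))]
  apply Finset.sum_nbij' (fun p => (⟨p.1.erase p.2, p.2⟩ : Σ _ : Finset (Fin n), Fin n))
    (fun p => ⟨insert p.2 p.1, p.2⟩)
  · rintro ⟨T, j⟩ h
    simp only [Finset.mem_sigma, Finset.mem_univ, true_and] at h ⊢
    simp [h]
  · rintro ⟨S, j⟩ h
    simp only [Finset.mem_sigma, Finset.mem_univ, true_and, Finset.mem_compl] at h ⊢
    simp
  · rintro ⟨T, j⟩ h
    simp only [Finset.mem_sigma, Finset.mem_univ, true_and] at h
    simp [Finset.insert_erase h]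
  · rintro ⟨S, j⟩ h
    simp only [Finset.mem_sigma, Finset.mem_univ, true_and, Finset.mem_compl] at h
    simp [Finset.erase_insert h]
  · rintro ⟨T, j⟩ h
    simp only [Finset.mem_sigma, Finset.mem_univ, true_and] at h
    simp [Finset.insert_erase h]

lemma commUD (n : ℕ) (f : Finset (Fin n) → ℝ) (S : Finset (Fin n)) :
    Dop n (Uop n f) S = Uop n (Dop n f) S + ((Sᶜ.card : ℝ) - S.card) * f S := by
  unfold Uop Dop
  have hL : ∑ i ∈ Sᶜ, ∑ j ∈ insert i S, f ((insert i S).erase j)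
      = ∑ i ∈ Sᶜ, (f S + ∑ j ∈ S, f (insert i (S.erase j))) := by
    apply Finset.sum_congr rfl
    intro i hi
    have hi' : i ∉ S := by simpa using hi
    rw [Finset.sum_insert hi', Finset.erase_insert hi']
    congr 1
    apply Finset.sum_congr rfl
    intro j hj
    have hij : j ≠ i := fun h => hi' (h ▸ hj)
    rw [Finset.erase_insert_of_ne hij.symm]
  have hR : ∑ j ∈ S, ∑ i ∈ (S.erase j)ᶜ, f (insert i (S.erase j))
      = ∑ j ∈ S, (f S + ∑ i ∈ Sᶜ, f (insert i (S.erase j))) := by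
    apply Finset.sum_congr rfl
    intro j hj
    have hcompl : (S.erase j)ᶜ = insert j Sᶜ := by
      ext x
      simp only [Finset.mem_compl, Finset.mem_erase, Finset.mem_insert]
      by_cases hx : x = j <;> simp [hx, hj]
    rw [hcompl, Finset.sum_insert (by simp [hj]), Finset.insert_erase hj]
  rw [hL, hR, Finset.sum_add_distrib, Finset.sum_add_distrib,
    Finset.sum_const, Finset.sum_const, Finset.sum_comm]
  simp only [nsmul_eq_mul]
  ring

/-- For `k ≥ 1` and all `a, b ∈ F(n,k)`:
`⟨s a, s b⟩ = ⟨s† a, s† b⟩ + (n − 2k)·⟨a, b⟩`, the coefficient taken in `ℝ`. -/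
theorem up_up_inner_eq_down_down_add (n k : ℕ) (hk : 1 ≤ k) (a b : FSub n k) :
    ip n (k + 1) (upOp n k a) (upOp n k b) =
      ip n (k - 1) (downOp n k a) (downOp n k b) + ((n : ℝ) - 2 * k) * ip n k a b := by
  rw [ip_ext, ip_ext, ip_ext]
  simp_rw [ext_up n k a, ext_up n k b, ext_down n k hk a, ext_down n k hk b]
  set ea := extF n k a with hea
  set eb := extF n k b with heb
  have h1 : ∑ T : Finset (Fin n), Uop n ea T * Uop n eb T
      = ∑ S : Finset (Fin n), ea S * Dop n (Uop n eb) S := adjointUD n ea (Uop n eb)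
  have h2 : ∑ S : Finset (Fin n), Dop n ea S * Dop n eb S
      = ∑ S : Finset (Fin n), ea S * Uop n (Dop n eb) S := by
    simp_rw [mul_comm (Dop n ea _)]
    rw [← adjointUD n (Dop n eb) ea]
    apply Finset.sum_congr rfl
    intro S _
    ring
  rw [h1, h2, Finset.mul_sum, ← Finset.sum_add_distrib]
  apply Finset.sum_congr rfl
  intro S _
  rw [commUD n eb S]
  by_cases h : S.card = k
  · have hkn : k ≤ n := by
      rw [← h]
      simpa using Finset.card_le_univ S
    have hc : (Sᶜ.card : ℝ) = (n : ℝ) - k := by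
      rw [Finset.card_compl, Fintype.card_fin, h, Nat.cast_sub hkn]
    rw [hc, h]
    ring
  · have hz : ea S = 0 := by simp [hea, extF, h]
    rw [hz]
    ring
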